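/- On the hexagonal lattice, if every vertex of a configuration σ is in state H (exactly two occupied incident faces), then σ is determined by its restriction to any single vertex's three incident faces; consequently there are exactly 3 such configurations, and each is periodic with respect to a sublattice of index 3. -/

import Mathlib

def allH (σ : ℤ × ℤ → Bool) : Prop :=
  ∀ i j : ℤ,
    ((if σ (i, j) then 1 else 0) + (if σ (i + 1, j) then 1 else 0)
      + (if σ (i, j + 1) then 1 else 0) = (2 : ℕ)) ∧
    ((if σ (i + 1, j + 1) then 1 else 0) + (if σ (i + 1, j) then 1 else 0)
      + (if σ (i, j + 1) then 1 else 0) = (2 : ℕ))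

namespace Stmt16

def hex (c : ZMod 3) : ℤ × ℤ → Bool := fun p => decide (((p.1 - p.2 : ℤ) : ZMod 3) ≠ c)

lemma hex_allH (c : ZMod 3) : allH (hex c) := by
  intro i j
  simp only [hex]
  have h1 : ((i + 1 - j : ℤ) : ZMod 3) = ((i - j : ℤ) : ZMod 3) + 1 := by push_cast; ring
  have h2 : ((i - (j + 1) : ℤ) : ZMod 3) = ((i - j : ℤ) : ZMod 3) - 1 := by push_cast; ring
  have h3 : ((i + 1 - (j + 1) : ℤ) : ZMod 3) = ((i - j : ℤ) : ZMod 3) := by push_cast; ring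
  simp only [h1, h2, h3]
  have aux : ∀ r c : ZMod 3,
      (((if decide (r ≠ c) = true then 1 else 0) + if decide (r + 1 ≠ c) = true then 1 else 0) +
          if decide (r - 1 ≠ c) = true then 1 else 0) = (2:ℕ) ∧
      (((if decide (r ≠ c) = true then 1 else 0) + if decide (r + 1 ≠ c) = true then 1 else 0) +
          if decide (r - 1 ≠ c) = true then 1 else 0) = (2:ℕ) := by decide
  exact aux _ c

lemma diag {σ : ℤ × ℤ → Bool} (h : allH σ) (i j : ℤ) : σ (i + 1, j + 1) = σ (i, j) := by
  obtain ⟨h1, h2⟩ := h i j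
  revert h1 h2
  cases σ (i + 1, j + 1) <;> cases σ (i, j) <;> cases σ (i + 1, j) <;> cases σ (i, j + 1) <;>
    simp

lemma diag_gen {σ : ℤ × ℤ → Bool} (h : allH σ) : ∀ j i : ℤ, σ (i, j) = σ (i - j, 0) := by
  intro j
  induction j using Int.induction_on with
  | zero => intro i; norm_num
  | succ n ih =>
      intro i
      have := diag h (i - 1) n
      rw [show (i - 1 + 1 : ℤ) = i by ring] at this
      rw [this, ih (i - 1)]; ring_nf
  | pred n ih =>
      intro i
      have := diag h i (-n - 1)
      rw [show (-n - 1 + 1 : ℤ) = -n by ring] at this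
      rw [← this, ih (i + 1)]; ring_nf

lemma rowprop {σ : ℤ × ℤ → Bool} (h : allH σ) (n : ℤ) :
    (if σ (n, 0) then 1 else 0) + (if σ (n + 1, 0) then 1 else 0)
      + (if σ (n + 2, 0) then 1 else 0) = (2 : ℕ) := by
  have h1 := (h (n + 1) 0).1
  have h2 : σ (n + 1, (0:ℤ) + 1) = σ (n, 0) := by
    rw [diag_gen h]; norm_num
  rw [h2] at h1
  rw [show (n + 1 + 1 : ℤ) = n + 2 by ring] at h1
  omega

lemma row_ext (f g : ℤ → Bool)
    (hf : ∀ n : ℤ, (if f n then 1 else 0) + (if f (n+1) then 1 else 0)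
      + (if f (n+2) then 1 else 0) = (2:ℕ))
    (hg : ∀ n : ℤ, (if g n then 1 else 0) + (if g (n+1) then 1 else 0)
      + (if g (n+2) then 1 else 0) = (2:ℕ))
    (h0 : f 0 = g 0) (h1 : f 1 = g 1) : ∀ n : ℤ, f n = g n := by
  have key : ∀ n : ℤ, f n = g n ∧ f (n + 1) = g (n + 1) := by
    intro n
    induction n using Int.induction_on with
    | zero => exact ⟨h0, h1⟩
    | succ n ih =>
        refine ⟨ih.2, ?_⟩
        have hfn := hf n; have hgn := hg n
        rw [ih.1, ih.2] at hfn
        rw [show (n + 1 + 1 : ℤ) = n + 2 by ring]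
        revert hfn hgn
        cases g (n + 2) <;> cases f (n + 2) <;> simp <;> omega
    | pred n ih =>
        rw [show (-(n:ℤ) - 1 + 1 : ℤ) = -n by ring]
        refine ⟨?_, ih.1⟩
        have hfn := hf (-n - 1); have hgn := hg (-n - 1)
        rw [show (-(n:ℤ) - 1 + 1 : ℤ) = -n by ring,
          show (-(n:ℤ) - 1 + 2 : ℤ) = -n + 1 by ring] at hfn hgn
        rw [ih.1, ih.2] at hfn
        revert hfn hgn
        cases g (-(n:ℤ) - 1) <;> cases f (-(n:ℤ) - 1) <;> simp <;> omega
  exact fun n => (key n).1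

def pick (σ : ℤ × ℤ → Bool) : ZMod 3 :=
  if σ (0, 0) = false then 0 else if σ (1, 0) = false then 1 else 2

lemma allH_eq_hex {σ : ℤ × ℤ → Bool} (h : allH σ) : σ = hex (pick σ) := by
  set c := pick σ with hc
  have hx : hex c (0, 0) = σ (0, 0) ∧ hex c (1, 0) = σ (1, 0) := by
    have h00 := (h 0 0).1
    simp only [zero_add] at h00
    rcases hσ0 : σ (0, 0) with _ | _ <;> rcases hσ1 : σ (1, 0) with _ | _ <;>
      rw [hσ0, hσ1] at h00
    · exfalso; rcases hσ2 : σ (0, 1) with _ | _ <;> rw [hσ2] at h00 <;> simp at h00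
    · have hcv : c = 0 := by rw [hc]; unfold pick; rw [hσ0, if_pos rfl]
      rw [hcv]; simp only [hex]; norm_num
    · have hcv : c = 1 := by
        rw [hc]; unfold pick; rw [hσ0, hσ1]
        rw [if_neg (by simp), if_pos rfl]
      rw [hcv]; simp only [hex]; norm_num
    · have hcv : c = 2 := by
        rw [hc]; unfold pick; rw [hσ0, hσ1]
        rw [if_neg (by simp), if_neg (by simp)]
      rw [hcv]; simp only [hex]; norm_num; decide
  have hrow := row_ext (fun n => σ (n, 0)) (fun n => hex c (n, 0))
    (fun n => rowprop h n) (fun n => rowprop (hex_allH c) n)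
    hx.1.symm hx.2.symm
  funext p
  obtain ⟨i, j⟩ := p
  rw [diag_gen h j i, diag_gen (hex_allH c) j i]
  exact hrow (i - j)

lemma allH_iff (σ : ℤ × ℤ → Bool) : allH σ ↔ ∃ c : ZMod 3, σ = hex c :=
  ⟨fun h => ⟨pick σ, allH_eq_hex h⟩, fun ⟨c, hc⟩ => hc ▸ hex_allH c⟩

end Stmt16

open Stmt16 in
/-- An all-H configuration is determined by its restriction to the three faces
incident to a single vertex; there are exactly 3 such configurations, and each
is periodic with respect to an index-3 sublattice of ℤ² (the one generated by
(1,1) and (3,0)). -/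
theorem stmt_16 :
    (∀ σ τ : ℤ × ℤ → Bool, allH σ → allH τ →
      σ (0, 0) = τ (0, 0) → σ (1, 0) = τ (1, 0) → σ (0, 1) = τ (0, 1) → σ = τ) ∧
    Set.ncard {σ : ℤ × ℤ → Bool | allH σ} = 3 ∧
    (∀ σ : ℤ × ℤ → Bool, allH σ → ∀ x y : ℤ,
      σ (x + 1, y + 1) = σ (x, y) ∧ σ (x + 3, y) = σ (x, y)) := by
  refine ⟨?_, ?_, ?_⟩
  · intro σ τ hσ hτ e0 e1 _
    rw [allH_eq_hex hσ, allH_eq_hex hτ]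
    have : pick σ = pick τ := by simp only [pick, e0, e1]
    rw [this]
  · have hset : {σ : ℤ × ℤ → Bool | allH σ} = {hex 0, hex 1, hex 2} := by
      ext σ
      simp only [Set.mem_setOf_eq, allH_iff, Set.mem_insert_iff, Set.mem_singleton_iff]
      constructor
      · rintro ⟨c, rfl⟩
        have : c = 0 ∨ c = 1 ∨ c = 2 := by revert c; decide
        rcases this with rfl | rfl | rfl <;> simp
      · rintro (rfl | rfl | rfl) <;> exact ⟨_, rfl⟩
    rw [hset]
    have d01 : hex 0 ≠ hex 1 := by
      intro h; have := congrFun h (0, 0); simp [hex] at this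
    have d02 : hex 0 ≠ hex 2 := by
      intro h; have := congrFun h (0, 0); simp [hex] at this
      exact absurd this (by decide)
    have d12 : hex 1 ≠ hex 2 := by
      intro h; have := congrFun h (1, 0); simp [hex] at this
      exact absurd this (by decide)
    rw [Set.ncard_insert_of_notMem (by simp [d01, d02])
      ((Set.finite_singleton _).insert _), Set.ncard_pair d12]
  · intro σ h x y
    refine ⟨diag h x y, ?_⟩
    rw [allH_eq_hex h]
    have h3 : ((x + 3 - y : ℤ) : ZMod 3) = ((x - y : ℤ) : ZMod 3) := by
      have e : (x + 3 - y : ℤ) = (x - y) + 3 := by ring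
      rw [e, Int.cast_add, show ((3 : ℤ) : ZMod 3) = 0 by decide, add_zero]
    simp only [hex, h3]
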